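/- Let m ≤ 0. Then for all u, v > 0, the divergence of the vector field (Υ₁X₁, Υ₂X₁) is negative, where Υ₁(u,v) = (av-1)u + mu²v - u³v, Υ₂(u,v) = 1 - (b+cu+du²)v, and X₁(u,v) = 1/(uv); explicitly, ∂ᵤ(Υ₁X₁) + ∂ᵥ(Υ₂X₁) = m - 2u - 1/(uv²) < 0. -/

import Mathlib

theorem dulac_X1
    (a b c d m : ℝ) (hm : m ≤ 0) :
    ∀ u v : ℝ, 0 < u → 0 < v →
      (deriv (fun u' => ((a * v - 1) * u' + m * u' ^ 2 * v - u' ^ 3 * v) * (1 / (u' * v))) u +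
       deriv (fun v' => (1 - (b + c * u + d * u ^ 2) * v') * (1 / (u * v'))) v =
        m - 2 * u - 1 / (u * v ^ 2)) ∧
      m - 2 * u - 1 / (u * v ^ 2) < 0 := by
  intro u v hu hv
  constructor
  · have h1 : deriv (fun u' => ((a * v - 1) * u' + m * u' ^ 2 * v - u' ^ 3 * v) * (1 / (u' * v))) u
        = m - 2 * u := by
      have heq : (fun u' => ((a * v - 1) * u' + m * u' ^ 2 * v - u' ^ 3 * v) * (1 / (u' * v)))
          =ᶠ[nhds u] (fun u' => (a * v - 1) / v + (m * u' - u' ^ 2)) := by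
        filter_upwards [eventually_ne_nhds hu.ne'] with x hx
        field_simp
        ring
      rw [heq.deriv_eq]
      have hd : HasDerivAt (fun u' : ℝ => (a * v - 1) / v + (m * u' - u' ^ 2))
          (m - 2 * u) u := by
        have h2 : HasDerivAt (fun u' : ℝ => m * u' - u' ^ 2) (m - 2 * u) u := by
          have := ((hasDerivAt_id u).const_mul m).sub (hasDerivAt_pow 2 u)
          simp at this
          exact this
        simpa using h2.const_add ((a * v - 1) / v)
      exact hd.deriv
    have h2 : deriv (fun v' => (1 - (b + c * u + d * u ^ 2) * v') * (1 / (u * v'))) v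
        = -(1 / (u * v ^ 2)) := by
      have heq : (fun v' => (1 - (b + c * u + d * u ^ 2) * v') * (1 / (u * v')))
          =ᶠ[nhds v] (fun v' => (1 / u) * v'⁻¹ - (b + c * u + d * u ^ 2) / u) := by
        filter_upwards [eventually_ne_nhds hv.ne'] with x hx
        field_simp
      rw [heq.deriv_eq]
      have hd : HasDerivAt (fun v' : ℝ => (1 / u) * v'⁻¹ - (b + c * u + d * u ^ 2) / u)
          (-(1 / (u * v ^ 2))) v := by
        have h3 := ((hasDerivAt_inv hv.ne').const_mul (1 / u)).sub_const
          ((b + c * u + d * u ^ 2) / u)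
        refine h3.congr_deriv ?_
        ring
      exact hd.deriv
    rw [h1, h2]; ring
  · have hpos : 0 < 1 / (u * v ^ 2) := by positivity
    nlinarith
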